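/- Let n ∈ ℕ, D ∈ HS^n_k(A,C), and let P_D be the free C-module with basis e_0,…,e_n endowed with the A-module structure determined by a·(Σ_i c_i e_i) = Σ_i c_i·(Σ_{j=0}^i D_{i-j}(a)·e_j). If M is a projective A-module, then M ⊗_A P_D is a projective C-module; if M is a free A-module, then M ⊗_A P_D is a free C-module. -/

import Mathlib

open TensorProduct

section Aux
variable {A : Type*} (C : Type*) [CommRing A] [CommRing C]
  (P : Type*) [AddCommGroup P] [Module C P] [Module A P] [SMulCommClass A C P]
  {M N : Type*} [AddCommGroup M] [Module A M] [AddCommGroup N] [Module A N]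

lemma lTensor_smulC (f : M →ₗ[A] N) (c : C) (x : P ⊗[A] M) :
    LinearMap.lTensor P f (c • x) = c • LinearMap.lTensor P f x := by
  induction x with
  | zero => simp
  | tmul p m => simp [smul_tmul']
  | add x y hx hy => simp [smul_add, hx, hy]

/-- `lTensor` upgraded to a `C`-linear map. -/
noncomputable def lTensorC (f : M →ₗ[A] N) : P ⊗[A] M →ₗ[C] P ⊗[A] N where
  toFun := LinearMap.lTensor P f
  map_add' := map_add _
  map_smul' := lTensor_smulC C P f

@[simp] lemma lTensorC_apply (f : M →ₗ[A] N) (x : P ⊗[A] M) :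
    lTensorC C P f x = LinearMap.lTensor P f x := rfl

/-- Tensoring with an `A`-linear equiv gives a `C`-linear equiv. -/
noncomputable def equivC (e : M ≃ₗ[A] N) : P ⊗[A] M ≃ₗ[C] P ⊗[A] N where
  __ := lTensorC C P e.toLinearMap
  invFun := lTensorC C P e.symm.toLinearMap
  left_inv x := by
    show LinearMap.lTensor P _ (LinearMap.lTensor P _ x) = x
    rw [← LinearMap.lTensor_comp_apply]
    simp
  right_inv x := by
    show LinearMap.lTensor P _ (LinearMap.lTensor P _ x) = x
    rw [← LinearMap.lTensor_comp_apply]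
    simp

/-- `P ⊗[A] (ι →₀ A)` is `C`-linearly equivalent to `ι →₀ P`. -/
lemma finsuppScalarRight_smulC (ι : Type*) [DecidableEq ι] (c : C) (x : P ⊗[A] (ι →₀ A)) :
    finsuppScalarRight A A P ι (c • x) = c • finsuppScalarRight A A P ι x := by
  induction x with
  | zero => simp
  | tmul p f =>
      ext i
      simp [smul_tmul', smul_comm]
  | add x y hx hy => rw [smul_add, map_add, map_add, smul_add, hx, hy]

noncomputable def scalarRightC (ι : Type*) [DecidableEq ι] : P ⊗[A] (ι →₀ A) ≃ₗ[C] ι →₀ P where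
  __ := finsuppScalarRight A A P ι
  map_smul' := finsuppScalarRight_smulC C P ι

lemma freeC (ι : Type*) [DecidableEq ι] [Module.Free C P] : Module.Free C (P ⊗[A] (ι →₀ A)) :=
  Module.Free.of_equiv (scalarRightC C P ι).symm

end Aux

/-- A higher derivation of order `n` from `A` to `C` over `k`. -/
def IsHSDeriv (k : Type*) {A C : Type*} [CommRing k] [CommRing A] [CommRing C]
    [Algebra k A] [Algebra k C] (n : ℕ) (D : Fin (n + 1) → (A →ₗ[k] C)) : Prop :=
  D 0 1 = 1 ∧
    ∀ (i : Fin (n + 1)) (a b : A),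
      D i (a * b) =
        ∑ p : Fin (n + 1), ∑ q : Fin (n + 1),
          if (p : ℕ) + (q : ℕ) = (i : ℕ) then D p a * D q b else 0

/-- let `D ∈ HS^n_k(A,C)` and `P_D` the free `C`-module with basis
`e_0,…,e_n`, endowed with the `A`-module structure (commuting with the `C`-action)
determined by `a • e_i = Σ_{j=0}^i D_{i-j}(a) • e_j`.  If `M` is a projective `A`-module
then `M ⊗_A P_D` is a projective `C`-module, and if `M` is free then so is `M ⊗_A P_D`. -/
theorem hs_module_projective_free
    (k A C : Type*) [CommRing k] [CommRing A] [CommRing C]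
    [Algebra k A] [Algebra k C] (n : ℕ)
    (D : Fin (n + 1) → (A →ₗ[k] C)) (hD : IsHSDeriv k n D)
    (P : Type*) [AddCommGroup P] [Module C P] [Module A P] [SMulCommClass A C P]
    (b : Module.Basis (Fin (n + 1)) C P)
    (hsmul : ∀ (a : A) (i : Fin (n + 1)),
      a • b i = ∑ j : Fin (n + 1),
        (if (j : ℕ) ≤ (i : ℕ) then
          D ⟨(i : ℕ) - (j : ℕ), Nat.lt_of_le_of_lt (Nat.sub_le _ _) i.isLt⟩ a
        else 0) • b j)
    (M : Type*) [AddCommGroup M] [Module A M] :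
    (Module.Projective A M → Module.Projective C (P ⊗[A] M)) ∧
    (Module.Free A M → Module.Free C (P ⊗[A] M)) := by
  classical
  haveI : Module.Free C P := Module.Free.of_basis b
  constructor
  · intro hM
    obtain ⟨s, hs⟩ := hM.out
    haveI : Module.Free C (P ⊗[A] (M →₀ A)) := freeC C P M
    refine Module.Projective.of_split (M := P ⊗[A] (M →₀ A))
      (lTensorC C P s) (lTensorC C P (Finsupp.linearCombination A id)) ?_
    have hcomp : (Finsupp.linearCombination A id).comp s = LinearMap.id :=
      LinearMap.ext hs
    ext x
    show LinearMap.lTensor P _ (LinearMap.lTensor P _ x) = x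
    rw [← LinearMap.lTensor_comp_apply, hcomp, LinearMap.lTensor_id, LinearMap.id_apply]
  · intro hM
    exact Module.Free.of_equiv
      ((equivC C P (Module.Free.chooseBasis A M).repr).trans
        (scalarRightC C P (Module.Free.ChooseBasisIndex A M))).symm
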